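/- arXiv:1003.4855 — 2 statements merged into one kernel-verified Lean document; each statement's English description precedes it below -/
import Mathlib

section
/- Let Π₁ = {A₁,...,A_k} and Π₂ = {B₁,...,B_t} be resolving partitions of connected graphs G₁ and G₂ respectively. Then the partition of V(G₁) × V(G₂) consisting of the sets A₁×B₁, A₁×B₂, ..., A₁×B_t, A₂×B₁, A₃×B₁, ..., A_k×B₁, together with C = (V₁×V₂) \ ((V₁×B₁) ∪ (A₁×V₂)), is a resolving partition of the Cartesian product G₁ × G₂ (with k + t parts, counting C when it is nonempty). -/
open SimpleGraph

/-- Distance from a vertex to a set of vertices: `min {d(v,x) : x ∈ P}`. -/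
noncomputable def distToSet {V : Type*} (G : SimpleGraph V) (v : V) (P : Set V) : ℕ :=
  sInf ((G.dist v) '' P)

/-- `S` is a resolving set of `G`. -/
def IsResolvingSet {V : Type*} (G : SimpleGraph V) (S : Set V) : Prop :=
  ∀ u v : V, u ≠ v → ∃ w ∈ S, G.dist u w ≠ G.dist v w

/-- The metric dimension of `G`. -/
noncomputable def metricDim {V : Type*} (G : SimpleGraph V) : ℕ :=
  sInf {n | ∃ S : Finset V, S.card = n ∧ IsResolvingSet G ↑S}

/-- `Π` is a resolving partition of `G`: a partition of the vertex set such that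
distinct vertices have distinct vectors of distances to the parts. -/
def IsResolvingPartition {V : Type*} (G : SimpleGraph V) (Pi : Set (Set V)) : Prop :=
  Setoid.IsPartition Pi ∧
    ∀ u v : V, u ≠ v → ∃ P ∈ Pi, distToSet G u P ≠ distToSet G v P

/-- The partition dimension of `G`. -/
noncomputable def partitionDim {V : Type*} (G : SimpleGraph V) : ℕ :=
  sInf {n | ∃ Pi : Finset (Set V), Pi.card = n ∧ IsResolvingPartition G ↑Pi}

private lemma walk_length_ge {V₁ V₂ : Type*} {G₁ : SimpleGraph V₁} {G₂ : SimpleGraph V₂}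
    (hG₁ : G₁.Connected) (hG₂ : G₂.Connected) {x y : V₁ × V₂}
    (w : (G₁.boxProd G₂).Walk x y) :
    G₁.dist x.1 y.1 + G₂.dist x.2 y.2 ≤ w.length := by
  induction w with
  | nil => simp
  | @cons u v z h p ih =>
    rw [SimpleGraph.Walk.length_cons]
    rcases SimpleGraph.boxProd_adj.mp h with ⟨h1, h2⟩ | ⟨h1, h2⟩
    · have t1 : G₁.dist u.1 z.1 ≤ G₁.dist u.1 v.1 + G₁.dist v.1 z.1 := hG₁.dist_triangle
      have e1 : G₁.dist u.1 v.1 = 1 := SimpleGraph.dist_eq_one_iff_adj.mpr h1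
      have e2 : G₂.dist u.2 z.2 = G₂.dist v.2 z.2 := by rw [h2]
      omega
    · have t1 : G₂.dist u.2 z.2 ≤ G₂.dist u.2 v.2 + G₂.dist v.2 z.2 := hG₂.dist_triangle
      have e1 : G₂.dist u.2 v.2 = 1 := SimpleGraph.dist_eq_one_iff_adj.mpr h1
      have e2 : G₁.dist u.1 z.1 = G₁.dist v.1 z.1 := by rw [h2]
      omega

private lemma boxProd_dist' {V₁ V₂ : Type*} {G₁ : SimpleGraph V₁} {G₂ : SimpleGraph V₂}
    (hG₁ : G₁.Connected) (hG₂ : G₂.Connected) (x y : V₁ × V₂) :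
    (G₁.boxProd G₂).dist x y = G₁.dist x.1 y.1 + G₂.dist x.2 y.2 := by
  obtain ⟨a, b⟩ := x
  obtain ⟨c, d⟩ := y
  apply le_antisymm
  · obtain ⟨p, hp⟩ := (hG₁.preconnected a c).exists_walk_length_eq_dist
    obtain ⟨q, hq⟩ := (hG₂.preconnected b d).exists_walk_length_eq_dist
    have hle := SimpleGraph.dist_le
      ((SimpleGraph.Walk.boxProdLeft G₂ b p).append (SimpleGraph.Walk.boxProdRight G₁ c q))
    rw [SimpleGraph.Walk.length_append] at hle
    simp only [SimpleGraph.Walk.boxProdLeft, SimpleGraph.Walk.boxProdRight,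
      SimpleGraph.Walk.length_map] at hle
    exact le_of_le_of_eq hle ((congrArg₂ (· + ·) (SimpleGraph.Walk.length_map _ p)
      (SimpleGraph.Walk.length_map _ q)).trans (by rw [hp, hq]))
  · obtain ⟨w, hw⟩ :=
      ((hG₁.boxProd hG₂).preconnected (a, b) (c, d)).exists_walk_length_eq_dist
    have h2 := walk_length_ge hG₁ hG₂ w
    rw [hw] at h2
    exact h2

private lemma distToSet_prod' {V₁ V₂ : Type*} {G₁ : SimpleGraph V₁} {G₂ : SimpleGraph V₂}
    (hG₁ : G₁.Connected) (hG₂ : G₂.Connected) (x : V₁) (y : V₂)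
    {P : Set V₁} {Q : Set V₂} (hP : P.Nonempty) (hQ : Q.Nonempty) :
    distToSet (G₁.boxProd G₂) (x, y) (P ×ˢ Q) = distToSet G₁ x P + distToSet G₂ y Q := by
  unfold distToSet
  apply le_antisymm
  · obtain ⟨a, ha, hda⟩ := Nat.sInf_mem (hP.image (G₁.dist x))
    obtain ⟨b, hb, hdb⟩ := Nat.sInf_mem (hQ.image (G₂.dist y))
    have mem : (G₁.boxProd G₂).dist (x, y) (a, b) ∈
        ((G₁.boxProd G₂).dist (x, y)) '' (P ×ˢ Q) :=
      Set.mem_image_of_mem _ (Set.mk_mem_prod ha hb)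
    have hle := Nat.sInf_le mem
    rw [boxProd_dist' hG₁ hG₂] at hle
    simp only at hle
    omega
  · apply le_csInf ((hP.prod hQ).image _)
    rintro n ⟨⟨a, b⟩, ⟨ha, hb⟩, rfl⟩
    rw [boxProd_dist' hG₁ hG₂]
    exact add_le_add (Nat.sInf_le ⟨a, ha, rfl⟩) (Nat.sInf_le ⟨b, hb, rfl⟩)

private lemma distToSet_eq_zero_of_mem {V : Type*} {G : SimpleGraph V} {v : V} {P : Set V}
    (h : v ∈ P) : distToSet G v P = 0 :=
  Nat.sInf_eq_zero.mpr (Or.inl ⟨v, h, SimpleGraph.dist_self⟩)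

theorem stmt_4 {V₁ V₂ : Type*} (G₁ : SimpleGraph V₁) (G₂ : SimpleGraph V₂)
    (hG₁ : G₁.Connected) (hG₂ : G₂.Connected) {k t : ℕ}
    (A : Fin (k + 1) → Set V₁) (B : Fin (t + 1) → Set V₂)
    (hA : IsResolvingPartition G₁ (Set.range A))
    (hB : IsResolvingPartition G₂ (Set.range B)) :
    IsResolvingPartition (G₁.boxProd G₂)
      (((Set.range fun j => A 0 ×ˢ B j) ∪ (Set.range fun i => A i ×ˢ B 0) ∪
        {Set.univ \ ((Set.univ ×ˢ B 0) ∪ (A 0 ×ˢ Set.univ))}) \ {∅}) := by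
  set C : Set (V₁ × V₂) := Set.univ \ ((Set.univ ×ˢ B 0) ∪ (A 0 ×ˢ Set.univ)) with hC
  -- basic facts about the partitions A and B
  have hAne : ∀ i, (A i).Nonempty := fun i =>
    Set.nonempty_iff_ne_empty.mpr (fun h => hA.1.1 (h ▸ Set.mem_range_self i))
  have hBne : ∀ j, (B j).Nonempty := fun j =>
    Set.nonempty_iff_ne_empty.mpr (fun h => hB.1.1 (h ▸ Set.mem_range_self j))
  have hAcover : ∀ x : V₁, ∃ i, x ∈ A i := by
    intro x
    obtain ⟨b, ⟨⟨i, rfl⟩, hxb⟩, -⟩ := hA.1.2 x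
    exact ⟨i, hxb⟩
  have hBcover : ∀ y : V₂, ∃ j, y ∈ B j := by
    intro y
    obtain ⟨b, ⟨⟨j, rfl⟩, hyb⟩, -⟩ := hB.1.2 y
    exact ⟨j, hyb⟩
  have hAuniq : ∀ (x : V₁) (i i' : Fin (k + 1)), x ∈ A i → x ∈ A i' → A i = A i' := by
    intro x i i' hi hi'
    obtain ⟨b, -, hu⟩ := hA.1.2 x
    rw [hu (A i) ⟨⟨i, rfl⟩, hi⟩, hu (A i') ⟨⟨i', rfl⟩, hi'⟩]
  have hBuniq : ∀ (y : V₂) (j j' : Fin (t + 1)), y ∈ B j → y ∈ B j' → B j = B j' := by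
    intro y j j' hj hj'
    obtain ⟨b, -, hu⟩ := hB.1.2 y
    rw [hu (B j) ⟨⟨j, rfl⟩, hj⟩, hu (B j') ⟨⟨j', rfl⟩, hj'⟩]
  -- membership in the collection
  have hmemAB : ∀ j : Fin (t + 1), (A 0 ×ˢ B j) ∈
      (((Set.range fun j => A 0 ×ˢ B j) ∪ (Set.range fun i => A i ×ˢ B 0) ∪ {C}) \ {∅}) := by
    intro j
    refine ⟨Or.inl (Or.inl ⟨j, rfl⟩), ?_⟩
    simpa using ((hAne 0).prod (hBne j)).ne_empty
  have hmemBA : ∀ i : Fin (k + 1), (A i ×ˢ B 0) ∈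
      (((Set.range fun j => A 0 ×ˢ B j) ∪ (Set.range fun i => A i ×ˢ B 0) ∪ {C}) \ {∅}) := by
    intro i
    refine ⟨Or.inl (Or.inr ⟨i, rfl⟩), ?_⟩
    simpa using ((hAne i).prod (hBne 0)).ne_empty
  constructor
  · -- it is a partition
    constructor
    · rintro ⟨-, h⟩
      exact h rfl
    · rintro ⟨x, y⟩
      -- uniqueness of the containing part
      have key : ∀ S S' : Set (V₁ × V₂),
          ((∃ j, S = A 0 ×ˢ B j) ∨ (∃ i, S = A i ×ˢ B 0) ∨ S = C) →
          ((∃ j, S' = A 0 ×ˢ B j) ∨ (∃ i, S' = A i ×ˢ B 0) ∨ S' = C) →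
          (x, y) ∈ S → (x, y) ∈ S' → S = S' := by
        rintro S S' (⟨j, rfl⟩ | ⟨i, rfl⟩ | rfl) (⟨j', rfl⟩ | ⟨i', rfl⟩ | rfl) hm hm'
        · rw [hBuniq y j j' hm.2 hm'.2]
        · rw [hAuniq x 0 i' hm.1 hm'.1, hBuniq y j 0 hm.2 hm'.2]
        · exact absurd (Or.inr ⟨hm.1, trivial⟩) hm'.2
        · rw [hAuniq x i 0 hm.1 hm'.1, hBuniq y 0 j' hm.2 hm'.2]
        · rw [hAuniq x i i' hm.1 hm'.1]
        · exact absurd (Or.inl ⟨trivial, hm.2⟩) hm'.2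
        · exact absurd (Or.inr ⟨hm'.1, trivial⟩) hm.2
        · exact absurd (Or.inl ⟨trivial, hm'.2⟩) hm.2
        · rfl
      have memof : ∀ S : Set (V₁ × V₂),
          S ∈ (((Set.range fun j => A 0 ×ˢ B j) ∪ (Set.range fun i => A i ×ˢ B 0) ∪ {C})
            \ {∅}) →
          ((∃ j, S = A 0 ×ˢ B j) ∨ (∃ i, S = A i ×ˢ B 0) ∨ S = C) := by
        rintro S ⟨(⟨j, rfl⟩ | ⟨i, rfl⟩) | h, -⟩
        · exact Or.inl ⟨j, rfl⟩
        · exact Or.inr (Or.inl ⟨i, rfl⟩)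
        · exact Or.inr (Or.inr h)
      by_cases hx0 : x ∈ A 0
      · obtain ⟨j, hj⟩ := hBcover y
        refine ⟨A 0 ×ˢ B j, ⟨hmemAB j, ⟨hx0, hj⟩⟩, ?_⟩
        rintro S ⟨hS, hmS⟩
        exact key S _ (memof S hS) (Or.inl ⟨j, rfl⟩) hmS ⟨hx0, hj⟩
      · by_cases hy0 : y ∈ B 0
        · obtain ⟨i, hi⟩ := hAcover x
          refine ⟨A i ×ˢ B 0, ⟨hmemBA i, ⟨hi, hy0⟩⟩, ?_⟩
          rintro S ⟨hS, hmS⟩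
          exact key S _ (memof S hS) (Or.inr (Or.inl ⟨i, rfl⟩)) hmS ⟨hi, hy0⟩
        · have hmC : (x, y) ∈ C := by
            refine ⟨trivial, ?_⟩
            rintro (⟨-, hy⟩ | ⟨hx, -⟩)
            · exact hy0 hy
            · exact hx0 hx
          refine ⟨C, ⟨⟨Or.inr rfl, ?_⟩, hmC⟩, ?_⟩
          · simpa using (Set.nonempty_of_mem hmC).ne_empty
          · rintro S ⟨hS, hmS⟩
            exact key S _ (memof S hS) (Or.inr (Or.inr rfl)) hmS hmC
  · -- it is resolving
    rintro ⟨x, y⟩ ⟨x', y'⟩ huv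
    by_cases hx : x = x'
    · subst hx
      have hy : y ≠ y' := fun h => huv (by rw [h])
      obtain ⟨P, ⟨j, rfl⟩, hne⟩ := hB.2 y y' hy
      refine ⟨A 0 ×ˢ B j, hmemAB j, ?_⟩
      rw [distToSet_prod' hG₁ hG₂ x y (hAne 0) (hBne j),
        distToSet_prod' hG₁ hG₂ x y' (hAne 0) (hBne j)]
      intro h
      exact hne (by omega)
    · have claim : ∃ i, distToSet G₁ x (A i) + distToSet G₂ y (B 0) ≠
          distToSet G₁ x' (A i) + distToSet G₂ y' (B 0) := by
        by_contra hcon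
        push_neg at hcon
        obtain ⟨ix, hix⟩ := hAcover x
        obtain ⟨ix', hix'⟩ := hAcover x'
        have h1 := hcon ix
        have h2 := hcon ix'
        rw [distToSet_eq_zero_of_mem hix] at h1
        rw [distToSet_eq_zero_of_mem hix'] at h2
        have hyy : distToSet G₂ y (B 0) = distToSet G₂ y' (B 0) := by omega
        obtain ⟨P, ⟨i, rfl⟩, hne⟩ := hA.2 x x' hx
        have := hcon i
        omega
      obtain ⟨i, hi⟩ := claim
      refine ⟨A i ×ˢ B 0, hmemBA i, ?_⟩
      rw [distToSet_prod' hG₁ hG₂ x y (hAne i) (hBne 0),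
        distToSet_prod' hG₁ hG₂ x' y' (hAne i) (hBne 0)]
      exact hi
end

section
/- For any connected graphs G₁ and G₂, pd(G₁ × G₂) ≤ pd(G₁) + dim(G₂), where pd denotes partition dimension, dim denotes metric dimension, and × denotes the Cartesian product. -/
open SimpleGraph

lemma boxProd_walk_length_ge {α β : Type*} {G : SimpleGraph α} {H : SimpleGraph β}
    (hG : G.Connected) (hH : H.Connected) :
    ∀ {x y : α × β} (w : (G.boxProd H).Walk x y),
      G.dist x.1 y.1 + H.dist x.2 y.2 ≤ w.length := by
  intro x y w
  induction w with
  | nil => simp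
  | @cons x z y h w ih =>
    rw [Walk.length_cons]
    rcases (boxProd_adj.mp h) with ⟨hadj, heq⟩ | ⟨heq2, hadj2⟩
    · have h1 : G.dist x.1 y.1 ≤ 1 + G.dist z.1 y.1 := by
        calc G.dist x.1 y.1 ≤ G.dist x.1 z.1 + G.dist z.1 y.1 := hG.dist_triangle
        _ ≤ 1 + G.dist z.1 y.1 := by
            have := (dist_eq_one_iff_adj).mpr hadj
            omega
      have h2 : H.dist x.2 y.2 = H.dist z.2 y.2 := by rw [heq]
      omega
    · have h1 : H.dist x.2 y.2 ≤ 1 + H.dist z.2 y.2 := by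
        calc H.dist x.2 y.2 ≤ H.dist x.2 z.2 + H.dist z.2 y.2 := hH.dist_triangle
        _ ≤ 1 + H.dist z.2 y.2 := by
            have := (dist_eq_one_iff_adj).mpr heq2
            omega
      have h2 : G.dist x.1 y.1 = G.dist z.1 y.1 := by rw [hadj2]
      omega

lemma boxProd_dist {α β : Type*} {G : SimpleGraph α} {H : SimpleGraph β}
    (hG : G.Connected) (hH : H.Connected) (a c : α) (b d : β) :
    (G.boxProd H).dist (a, b) (c, d) = G.dist a c + H.dist b d := by
  apply le_antisymm
  · obtain ⟨p, hp⟩ := hG.exists_walk_length_eq_dist a c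
    obtain ⟨q, hq⟩ := hH.exists_walk_length_eq_dist b d
    refine le_trans (dist_le ((p.boxProdLeft H b).append (q.boxProdRight G c))) ?_
    rw [Walk.length_append, show (p.boxProdLeft H b).length = p.length from Walk.length_map _ _,
      show (q.boxProdRight G c).length = q.length from Walk.length_map _ _, hp, hq]
  · obtain ⟨w, hw⟩ := ((hG.boxProd hH).exists_walk_length_eq_dist (a, b) (c, d))
    rw [← hw]
    exact boxProd_walk_length_ge hG hH w

lemma distToSet_singleton {V : Type*} (G : SimpleGraph V) (v s : V) :
    distToSet G v {s} = G.dist v s := by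
  unfold distToSet; rw [Set.image_singleton, csInf_singleton]

lemma distToSet_univ {V : Type*} (G : SimpleGraph V) (u : V) :
    distToSet G u Set.univ = 0 := by
  have : (0 : ℕ) ∈ (G.dist u) '' Set.univ := ⟨u, Set.mem_univ u, dist_self⟩
  have := Nat.sInf_le this
  unfold distToSet
  omega

lemma distToSet_boxProd {α β : Type*} {G : SimpleGraph α} {H : SimpleGraph β}
    (hG : G.Connected) (hH : H.Connected) (u : α) (v : β) {A : Set α} {B : Set β}
    (hA : A.Nonempty) (hB : B.Nonempty) :
    distToSet (G.boxProd H) (u, v) (A ×ˢ B) = distToSet G u A + distToSet H v B := by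
  unfold distToSet
  apply le_antisymm
  · obtain ⟨a, ha, hda⟩ := Nat.sInf_mem (hA.image (G.dist u))
    obtain ⟨b, hb, hdb⟩ := Nat.sInf_mem (hB.image (H.dist v))
    refine Nat.sInf_le ⟨(a, b), ⟨ha, hb⟩, ?_⟩
    rw [boxProd_dist hG hH, hda, hdb]
  · refine le_csInf ((hA.prod hB).image _) ?_
    rintro n ⟨⟨a, b⟩, ⟨ha, hb⟩, rfl⟩
    rw [boxProd_dist hG hH]
    exact add_le_add (Nat.sInf_le ⟨a, ha, rfl⟩) (Nat.sInf_le ⟨b, hb, rfl⟩)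

lemma metricDim_exists {V : Type*} [Fintype V] (G : SimpleGraph V) (hG : G.Connected) :
    ∃ S : Finset V, S.card = metricDim G ∧ IsResolvingSet G ↑S ∧ ∃ b₀, b₀ ∉ S := by
  classical
  have hne : {n | ∃ S : Finset V, S.card = n ∧ IsResolvingSet G ↑S}.Nonempty := by
    refine ⟨(Finset.univ : Finset V).card, Finset.univ, rfl, ?_⟩
    intro u v huv
    exact ⟨u, by simp, by
      have := hG.pos_dist_of_ne (Ne.symm huv)
      rw [SimpleGraph.dist_self]; omega⟩
  obtain ⟨S, hcard, hres⟩ := Nat.sInf_mem hne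
  refine ⟨S, hcard, hres, ?_⟩
  by_contra hall
  push_neg at hall
  have hVne : Nonempty V := hG.nonempty
  obtain ⟨v₀⟩ := hVne
  have hres' : IsResolvingSet G ↑(S.erase v₀) := by
    intro u v huv
    by_cases hu : u = v₀
    · refine ⟨v, Finset.mem_erase.mpr ⟨by rw [hu] at huv; exact (Ne.symm huv), hall v⟩, ?_⟩
      have := hG.pos_dist_of_ne huv
      rw [SimpleGraph.dist_self]; omega
    · refine ⟨u, Finset.mem_erase.mpr ⟨hu, hall u⟩, ?_⟩
      have := hG.pos_dist_of_ne (Ne.symm huv)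
      rw [SimpleGraph.dist_self]; omega
  have hmem : (S.erase v₀).card ∈ {n | ∃ S : Finset V, S.card = n ∧ IsResolvingSet G ↑S} :=
    ⟨S.erase v₀, rfl, hres'⟩
  have hlt : (S.erase v₀).card < S.card := Finset.card_erase_lt_of_mem (hall v₀)
  have := Nat.sInf_le hmem
  omega

lemma partitionDim_exists {V : Type*} [Fintype V] (G : SimpleGraph V) (hG : G.Connected) :
    ∃ Pi : Finset (Set V), Pi.card = partitionDim G ∧ IsResolvingPartition G ↑Pi := by
  have hne : {n | ∃ Pi : Finset (Set V), Pi.card = n ∧ IsResolvingPartition G ↑Pi}.Nonempty := by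
    classical
    refine ⟨_, Finset.univ.image (fun v => ({v} : Set V)), rfl, ?_, ?_⟩
    · constructor
      · intro h
        simp only [Finset.coe_image, Finset.coe_univ, Set.image_univ, Set.mem_range] at h
        obtain ⟨v, hv⟩ := h
        exact (Set.singleton_ne_empty v) hv
      · intro a
        refine ⟨{a}, ⟨by simp, rfl⟩, ?_⟩
        rintro P ⟨hP, haP⟩
        simp only [Finset.coe_image, Finset.coe_univ, Set.image_univ, Set.mem_range] at hP
        obtain ⟨v, rfl⟩ := hP
        simp only [Set.mem_singleton_iff] at haP
        rw [haP]
    · intro u v huv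
      refine ⟨{u}, by simp, ?_⟩
      rw [distToSet_singleton, distToSet_singleton, dist_self]
      have := hG.pos_dist_of_ne (Ne.symm huv)
      omega
  obtain ⟨Pi, hcard, hres⟩ := Nat.sInf_mem hne
  exact ⟨Pi, hcard, hres⟩

theorem stmt_5 {V₁ V₂ : Type*} [Fintype V₁] [Fintype V₂]
    (G₁ : SimpleGraph V₁) (G₂ : SimpleGraph V₂)
    (hG₁ : G₁.Connected) (hG₂ : G₂.Connected) :
    partitionDim (G₁.boxProd G₂) ≤ partitionDim G₁ + metricDim G₂ := by
  classical
  obtain ⟨Pi₁, hPcard, hPres⟩ := partitionDim_exists G₁ hG₁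
  obtain ⟨S, hScard, hSres, b₀, hb₀⟩ := metricDim_exists G₂ hG₂
  haveI hV₁ : Nonempty V₁ := hG₁.nonempty
  set Pi' : Finset (Set (V₁ × V₂)) :=
    (Pi₁.image fun A => A ×ˢ ((↑S : Set V₂)ᶜ)) ∪
      (S.image fun s => (Set.univ : Set V₁) ×ˢ ({s} : Set V₂)) with hPi'
  have hmem : ∀ P : Set (V₁ × V₂), P ∈ Pi' ↔
      (∃ A ∈ Pi₁, A ×ˢ ((↑S : Set V₂)ᶜ) = P) ∨
        (∃ s ∈ S, (Set.univ : Set V₁) ×ˢ ({s} : Set V₂) = P) := by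
    intro P
    simp [hPi', Finset.mem_union, Finset.mem_image]
  have hScne : ((↑S : Set V₂)ᶜ).Nonempty := ⟨b₀, hb₀⟩
  have hAne : ∀ A ∈ Pi₁, (A : Set V₁).Nonempty := by
    intro A hA
    rw [Set.nonempty_iff_ne_empty]
    intro h
    exact hPres.1.1 (h ▸ (Finset.mem_coe.mpr hA))
  have hpart : Setoid.IsPartition (↑Pi' : Set (Set (V₁ × V₂))) := by
    constructor
    · intro h
      rw [Finset.mem_coe, hmem] at h
      rcases h with ⟨A, hA, hAe⟩ | ⟨s, hs, hse⟩
      · exact absurd hAe (Set.nonempty_iff_ne_empty.mp ((hAne A hA).prod hScne))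
      · exact absurd hse
          (Set.nonempty_iff_ne_empty.mp (Set.univ_nonempty.prod (Set.singleton_nonempty s)))
    · rintro ⟨u, v⟩
      by_cases hv : v ∈ S
      · refine ⟨(Set.univ : Set V₁) ×ˢ ({v} : Set V₂),
          ⟨Finset.mem_coe.mpr ((hmem _).mpr (Or.inr ⟨v, hv, rfl⟩)), by simp⟩, ?_⟩
        rintro P ⟨hP, huvP⟩
        rw [Finset.mem_coe, hmem] at hP
        rcases hP with ⟨A, hA, rfl⟩ | ⟨s, hs, rfl⟩
        · exact absurd hv (by simpa using huvP.2)
        · have hvs : v = s := by simpa using huvP.2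
          rw [hvs]
      · obtain ⟨A, ⟨hA, huA⟩, hAuniq⟩ := hPres.1.2 u
        refine ⟨A ×ˢ ((↑S : Set V₂)ᶜ),
          ⟨Finset.mem_coe.mpr ((hmem _).mpr (Or.inl ⟨A, Finset.mem_coe.mp hA, rfl⟩)),
            ⟨huA, hv⟩⟩, ?_⟩
        rintro P ⟨hP, huvP⟩
        rw [Finset.mem_coe, hmem] at hP
        rcases hP with ⟨A', hA', rfl⟩ | ⟨s, hs, rfl⟩
        · have : A' = A := hAuniq A' ⟨Finset.mem_coe.mpr hA', huvP.1⟩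
          rw [this]
        · have hvs : v = s := by simpa using huvP.2
          exact absurd (show v ∈ S by rw [hvs]; exact hs) hv
  have hres : ∀ p q : V₁ × V₂, p ≠ q →
      ∃ P ∈ (↑Pi' : Set (Set (V₁ × V₂))),
        distToSet (G₁.boxProd G₂) p P ≠ distToSet (G₁.boxProd G₂) q P := by
    rintro ⟨u, v⟩ ⟨u', v'⟩ hnepq
    by_cases hvv : v = v'
    · subst hvv
      have huu : u ≠ u' := fun h => hnepq (by rw [h])
      obtain ⟨A, hA, hdA⟩ := hPres.2 u u' huu
      have hAm : A ∈ Pi₁ := Finset.mem_coe.mp hA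
      refine ⟨A ×ˢ ((↑S : Set V₂)ᶜ),
        Finset.mem_coe.mpr ((hmem _).mpr (Or.inl ⟨A, hAm, rfl⟩)), ?_⟩
      rw [distToSet_boxProd hG₁ hG₂ u v (hAne A hAm) hScne,
          distToSet_boxProd hG₁ hG₂ u' v (hAne A hAm) hScne]
      omega
    · obtain ⟨s, hs, hds⟩ := hSres v v' hvv
      have hsm : s ∈ S := hs
      refine ⟨(Set.univ : Set V₁) ×ˢ ({s} : Set V₂),
        Finset.mem_coe.mpr ((hmem _).mpr (Or.inr ⟨s, hsm, rfl⟩)), ?_⟩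
      rw [distToSet_boxProd hG₁ hG₂ u v Set.univ_nonempty (Set.singleton_nonempty s),
          distToSet_boxProd hG₁ hG₂ u' v' Set.univ_nonempty (Set.singleton_nonempty s),
          distToSet_univ, distToSet_univ, distToSet_singleton, distToSet_singleton]
      omega
  have hfinal : partitionDim (G₁.boxProd G₂) ≤ Pi'.card :=
    Nat.sInf_le ⟨Pi', rfl, hpart, hres⟩
  calc partitionDim (G₁.boxProd G₂) ≤ Pi'.card := hfinal
  _ ≤ Pi₁.card + S.card := (Finset.card_union_le _ _).trans
      (add_le_add Finset.card_image_le Finset.card_image_le)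
  _ = partitionDim G₁ + metricDim G₂ := by rw [hPcard, hScard]
end
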